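/- arXiv:1909.12751 — 2 statements merged into one kernel-verified Lean document; each statement's English description precedes it below -/
import Mathlib

section
/- (1) For any smooth f : S → ℍ, the function (∂F/∂ν − ⟨ν, 𝔇̄F⟩)|_S is the same for every smooth extension F of f to a neighborhood of S; this common value is f^⊥. (2) If f is CRF and F is a smooth extension of f with 𝔇̄F = 0 at every point of S, then ∂F/∂ν = f^⊥ on S, and (∂F/∂x_α)|_S = f_{(x_α)}, (∂F/∂y_α)|_S = f_{(y_α)} for α = 0,1,2,3. -/
/-!
Quaternionic analysis in two variables: the Cauchy–Riemann–Fueter operator,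
CRF functions and admissible functions on a hypersurface `S ⊂ ℍ²`.
-/

noncomputable section

open Set

/-- The quaternions. -/
local notation "ℍ" => Quaternion ℝ

/-- `ℍ²`. -/
abbrev E : Type := ℍ × ℍ

/-- The real basis `1, i, j, k` of `ℍ`. -/
def e : Fin 4 → ℍ := ![1, ⟨0,1,0,0⟩, ⟨0,0,1,0⟩, ⟨0,0,0,1⟩]

/-- The coordinate directions of the first quaternionic variable. -/
def e1 (α : Fin 4) : E := (e α, 0)

/-- The coordinate directions of the second quaternionic variable. -/
def e2 (α : Fin 4) : E := (0, e α)

/-- The Euclidean scalar product of `ℍ ≅ ℝ⁴`. -/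
def qdot (p q : ℍ) : ℝ := (star p * q).re

/-- The Euclidean scalar product of `ℍ² ≅ ℝ⁸`. -/
def edot (p q : E) : ℝ := qdot p.1 q.1 + qdot p.2 q.2

/-- The quaternionic scalar product `⟨p,r⟩ = p̄₁r₁ + p̄₂r₂` on `ℍ²`. -/
def qinner (p r : E) : ℍ := star p.1 * r.1 + star p.2 * r.2

/-- `∂F/∂q̄₁ = Σ_α i_α ∂F/∂x_α`. -/
def dbar1 (F : E → ℍ) : E → ℍ := fun p => ∑ α, e α * fderiv ℝ F p (e1 α)

/-- `∂F/∂q̄₂ = Σ_α i_α ∂F/∂y_α`. -/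
def dbar2 (F : E → ℍ) : E → ℍ := fun p => ∑ α, e α * fderiv ℝ F p (e2 α)

/-- `∂F/∂q₁ = Σ_α ī_α ∂F/∂x_α`. -/
def d1 (F : E → ℍ) : E → ℍ := fun p => ∑ α, star (e α) * fderiv ℝ F p (e1 α)

/-- `∂F/∂q₂ = Σ_α ī_α ∂F/∂y_α`. -/
def d2 (F : E → ℍ) : E → ℍ := fun p => ∑ α, star (e α) * fderiv ℝ F p (e2 α)

/-- The Cauchy–Riemann–Fueter operator `𝔇̄F = (∂F/∂q̄₁, ∂F/∂q̄₂)`. -/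
def Dbar (F : E → ℍ) : E → E := fun p => (dbar1 F p, dbar2 F p)

/-- `Δ₁`, the Laplacian in the variables `x₀,…,x₃`. -/
def lap1 (F : E → ℍ) : E → ℍ :=
  fun p => ∑ α, fderiv ℝ (fun x => fderiv ℝ F x (e1 α)) p (e1 α)

/-- `Δ₂`, the Laplacian in the variables `y₀,…,y₃`. -/
def lap2 (F : E → ℍ) : E → ℍ :=
  fun p => ∑ α, fderiv ℝ (fun x => fderiv ℝ F x (e2 α)) p (e2 α)

/-- The Euclidean gradient `∇ρ` of a real valued function on `ℍ² ≅ ℝ⁸`. -/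
def grad (ρ : E → ℝ) (p : E) : E :=
  (∑ α, fderiv ℝ ρ p (e1 α) • e α, ∑ α, fderiv ℝ ρ p (e2 α) • e α)

/-- The unit normal `ν = ∇ρ/|∇ρ|` of `S = {ρ = 0}`. -/
def nu (ρ : E → ℝ) (p : E) : E :=
  (Real.sqrt (edot (grad ρ p) (grad ρ p)))⁻¹ • grad ρ p

/-- `F` is a smooth extension of `f : S → ℍ` to an open neighborhood of `S`. -/
def SmoothExt (S : Set E) (f F : E → ℍ) : Prop :=
  ∃ U : Set E, IsOpen U ∧ S ⊆ U ∧ ContDiffOn ℝ (⊤:ℕ∞) F U ∧ EqOn F f S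

/-- `f : S → ℍ` is smooth (it admits a smooth extension near `S`). -/
def SmoothOnS (S : Set E) (f : E → ℍ) : Prop := ∃ F, SmoothExt S f F

/-- `f : S → ℍ` is a CRF function: some smooth extension `F` of `f`
satisfies `𝔇̄F = 0` at every point of `S`. -/
def IsCRF (S : Set E) (f : E → ℍ) : Prop :=
  ∃ F, SmoothExt S f F ∧ ∀ p ∈ S, dbar1 F p = 0 ∧ dbar2 F p = 0

/-- The expression `∂F/∂ν − ⟨ν, 𝔇̄F⟩` defining `f^⊥` through the extension `F`. -/
def perpOf (ρ : E → ℝ) (F : E → ℍ) (p : E) : ℍ :=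
  fderiv ℝ F p (nu ρ p) - qinner (nu ρ p) (Dbar F p)

/-- `f_{(x_α)} = τ_{x_α}(f) + (∂/∂x_α, ν) f^⊥`, computed through the extension `F`. -/
def fx (ρ : E → ℝ) (F : E → ℍ) (α : Fin 4) (p : E) : ℍ :=
  fderiv ℝ F p (e1 α - edot (e1 α) (nu ρ p) • nu ρ p)
    + edot (e1 α) (nu ρ p) • perpOf ρ F p

/-- `f_{(y_α)} = τ_{y_α}(f) + (∂/∂y_α, ν) f^⊥`, computed through the extension `F`. -/
def fy (ρ : E → ℝ) (F : E → ℍ) (α : Fin 4) (p : E) : ℍ :=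
  fderiv ℝ F p (e2 α - edot (e2 α) (nu ρ p) • nu ρ p)
    + edot (e2 α) (nu ρ p) • perpOf ρ F p

/-- `f_{(q̄₁)} = Σ_α i_α f_{(x_α)}`. -/
def fq1bar (ρ : E → ℝ) (F : E → ℍ) (p : E) : ℍ := ∑ α, e α * fx ρ F α p

/-- `f_{(q̄₂)} = Σ_α i_α f_{(y_α)}`. -/
def fq2bar (ρ : E → ℝ) (F : E → ℍ) (p : E) : ℍ := ∑ α, e α * fy ρ F α p

/-- `f` is admissible: `f` is CRF and the eight functions
`f_{(x_α)}, f_{(y_α)}` (`α = 0,1,2,3`) are CRF. -/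
def Admissible (ρ : E → ℝ) (S : Set E) (f : E → ℍ) : Prop :=
  IsCRF S f ∧ ∀ F, SmoothExt S f F →
    ∀ α : Fin 4, IsCRF S (fx ρ F α) ∧ IsCRF S (fy ρ F α)

/-- `∂F/∂ρ`, the derivative along the vector field `∇ρ/|∇ρ|²`. -/
def drho (ρ : E → ℝ) (F : E → ℍ) : E → ℍ :=
  fun p => fderiv ℝ F p ((edot (grad ρ p) (grad ρ p))⁻¹ • grad ρ p)

/-- The iterated derivative `∂^k F/∂ρ^k`. -/
def drhoIter (ρ : E → ℝ) : ℕ → (E → ℍ) → (E → ℍ)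
  | 0 => fun F => F
  | (k+1) => fun F => drho ρ (drhoIter ρ k F)


/-! ### Auxiliary lemmas -/

section AuxLemmas

@[simp] lemma qdot_zero_right (p : ℍ) : qdot p 0 = 0 := by simp [qdot]; rfl

lemma qdot_comm (p q : ℍ) : qdot p q = qdot q p := by
  simp [qdot]; ring

lemma qdot_self (q : ℍ) : qdot q q = Quaternion.normSq q := by
  rw [qdot, Quaternion.star_mul_self, Quaternion.re_coe]

lemma qdot_smul_left (c : ℝ) (p q : ℍ) : qdot (c • p) q = c * qdot p q := by
  simp [qdot]

lemma qdot_add_left (p p' q : ℍ) : qdot (p + p') q = qdot p q + qdot p' q := by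
  simp [qdot, add_mul]

lemma qdot_smul_right (c : ℝ) (p q : ℍ) : qdot p (c • q) = c * qdot p q := by
  simp [qdot]

lemma edot_comm (p q : E) : edot p q = edot q p := by
  simp [edot, qdot_comm p.1 q.1, qdot_comm p.2 q.2]

lemma edot_smul_right (c : ℝ) (p q : E) : edot p (c • q) = c * edot p q := by
  simp [edot, qdot_smul_right, mul_add]

lemma edot_self_pos {g : E} (hg : g ≠ 0) : 0 < edot g g := by
  have h1 : (0:ℝ) ≤ Quaternion.normSq g.1 := Quaternion.normSq_nonneg
  have h2 : (0:ℝ) ≤ Quaternion.normSq g.2 := Quaternion.normSq_nonneg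
  have : g.1 ≠ 0 ∨ g.2 ≠ 0 := by
    by_contra h
    push_neg at h
    exact hg (Prod.ext h.1 h.2)
  rw [edot, qdot_self, qdot_self]
  rcases this with h | h
  · have := Quaternion.normSq_ne_zero.2 h
    have : 0 < Quaternion.normSq g.1 := lt_of_le_of_ne h1 (Ne.symm this)
    linarith
  · have := Quaternion.normSq_ne_zero.2 h
    have : 0 < Quaternion.normSq g.2 := lt_of_le_of_ne h2 (Ne.symm this)
    linarith

lemma expand_q (w : ℍ) : ∑ α, qdot (e α) w • e α = w := by
  have a0 : (e 0).re = 1 := rfl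
  have b0 : (e 0).imI = 0 := rfl
  have c0 : (e 0).imJ = 0 := rfl
  have d0 : (e 0).imK = 0 := rfl
  have a1 : (e 1).re = 0 := rfl
  have b1 : (e 1).imI = 1 := rfl
  have c1 : (e 1).imJ = 0 := rfl
  have d1 : (e 1).imK = 0 := rfl
  have a2 : (e 2).re = 0 := rfl
  have b2 : (e 2).imI = 0 := rfl
  have c2 : (e 2).imJ = 1 := rfl
  have d2 : (e 2).imK = 0 := rfl
  have a3 : (e 3).re = 0 := rfl
  have b3 : (e 3).imI = 0 := rfl
  have c3 : (e 3).imJ = 0 := rfl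
  have d3 : (e 3).imK = 1 := rfl
  rw [Fin.sum_univ_four]
  ext <;> simp [qdot, a0, b0, c0, d0, a1, b1, c1, d1, a2, b2, c2, d2, a3, b3, c3, d3]

lemma expand_E (w : E) :
    w = (∑ α, qdot (e α) w.1 • e1 α) + (∑ α, qdot (e α) w.2 • e2 α) := by
  refine Prod.ext ?_ ?_ <;>
    simp [e1, e2, Prod.fst_sum, Prod.snd_sum, expand_q]

lemma clm_expand {X : Type*} [NormedAddCommGroup X] [NormedSpace ℝ X]
    (T : E →L[ℝ] X) (w : E) :
    T w = ∑ α, qdot (e α) w.1 • T (e1 α) + ∑ α, qdot (e α) w.2 • T (e2 α) := by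
  conv_lhs => rw [expand_E w]
  simp

lemma edot_grad_eq (ρ : E → ℝ) (p w : E) :
    edot (grad ρ p) w = fderiv ℝ ρ p w := by
  rw [clm_expand (fderiv ℝ ρ p) w]
  simp [edot, grad, Fin.sum_univ_four, qdot_add_left, qdot_smul_left]
  ring

lemma edot_e1 (w : E) (α : Fin 4) : edot w (e1 α) = qdot (e α) w.1 := by
  simp [edot, e1, qdot_comm]

lemma edot_e2 (w : E) (α : Fin 4) : edot w (e2 α) = qdot (e α) w.2 := by
  simp [edot, e2, qdot_comm]

lemma sum_edot_e1 (w : E) : ∑ α, edot w (e1 α) • e α = w.1 := by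
  simp_rw [edot_e1]; exact expand_q w.1

lemma sum_edot_e2 (w : E) : ∑ α, edot w (e2 α) • e α = w.2 := by
  simp_rw [edot_e2]; exact expand_q w.2

lemma grad_ne_zero_fderiv {ρ : E → ℝ} {p : E} (h : grad ρ p ≠ 0) :
    fderiv ℝ ρ p ≠ 0 := by
  intro h0
  exact h (by simp [grad, h0])

end AuxLemmas

section Tangency

open Filter Topology

lemma tangency {Ω : Set E} (hΩ : IsOpen Ω) {ρ : E → ℝ}
    (hρ : ContDiffOn ℝ (⊤:ℕ∞) ρ Ω) {S : Set E} (hS : S = {p ∈ Ω | ρ p = 0})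
    {p : E} (hp : p ∈ S) (hL0 : fderiv ℝ ρ p ≠ 0)
    {H : E → ℍ} (hH : DifferentiableAt ℝ H p) (hH0 : ∀ q ∈ S, H q = 0)
    {v : E} (hv : fderiv ℝ ρ p v = 0) : fderiv ℝ H p v = 0 := by
  have hpΩ : p ∈ Ω := by rw [hS] at hp; exact hp.1
  have hρp : ρ p = 0 := by rw [hS] at hp; exact hp.2
  set L := fderiv ℝ ρ p with hL
  have hst : HasStrictFDerivAt ρ L p :=
    (hρ.contDiffAt (hΩ.mem_nhds hpΩ)).hasStrictFDerivAt (by simp)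
  have hsurj : L.range = ⊤ := by
    rw [LinearMap.range_eq_top]
    intro c
    obtain ⟨w, hw⟩ := DFunLike.ne_iff.1 hL0
    have hw' : L w ≠ 0 := by simpa using hw
    exact ⟨(c / L w) • w, by
      simp only [map_smul, smul_eq_mul]
      exact div_mul_cancel₀ c hw'⟩
  set γ : L.ker → E := hst.implicitFunction ρ L hsurj (ρ p) with hγ
  have hγ0 : γ 0 = p := by
    simpa [hγ] using hst.implicitFunction_apply_image hsurj
  have hγd : HasStrictFDerivAt γ L.ker.subtypeL 0 :=
    hst.to_implicitFunction hsurj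
  have h1 : ∀ᶠ y : L.ker in 𝓝 0, ρ (γ y) = ρ p := by
    have hev := hst.map_implicitFunction_eq hsurj
    have hc : Tendsto (fun y : L.ker => ((ρ p, y) : ℝ × L.ker))
        (𝓝 0) (𝓝 (ρ p, 0)) :=
      (continuous_const.prodMk continuous_id).tendsto 0
    exact hc.eventually hev
  have h2 : ∀ᶠ y : L.ker in 𝓝 0, γ y ∈ Ω := by
    have hcont : Tendsto γ (𝓝 0) (𝓝 p) := by
      have := hγd.continuousAt
      rwa [ContinuousAt, hγ0] at this
    exact hcont (hΩ.mem_nhds hpΩ)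
  have h3 : (H ∘ γ) =ᶠ[𝓝 (0 : L.ker)] fun _ => (0:ℍ) := by
    filter_upwards [h1, h2] with y hy1 hy2
    exact hH0 _ (by rw [hS]; exact ⟨hy2, by rw [hy1, hρp]⟩)
  have hz : HasFDerivAt (H ∘ γ) (0 : L.ker →L[ℝ] ℍ) 0 :=
    (hasFDerivAt_const (0:ℍ) _).congr_of_eventuallyEq h3
  have hc2 : HasFDerivAt (H ∘ γ) ((fderiv ℝ H p).comp L.ker.subtypeL) 0 := by
    have h' : HasFDerivAt H (fderiv ℝ H p) (γ 0) := by
      rw [hγ0]; exact hH.hasFDerivAt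
    exact h'.comp 0 hγd.hasFDerivAt
  have heq : (fderiv ℝ H p).comp L.ker.subtypeL
      = (0 : L.ker →L[ℝ] ℍ) := hc2.unique hz
  have := congrArg (fun T : L.ker →L[ℝ] ℍ => T ⟨v, LinearMap.mem_ker.2 hv⟩) heq
  simp only [ContinuousLinearMap.comp_apply, ContinuousLinearMap.zero_apply,
    Submodule.coe_subtypeL', Submodule.subtype_apply] at this
  exact this

lemma ext_deriv_eq {Ω : Set E} (hΩ : IsOpen Ω) {ρ : E → ℝ}
    (hρ : ContDiffOn ℝ (⊤:ℕ∞) ρ Ω) {S : Set E} (hS : S = {p ∈ Ω | ρ p = 0})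
    {f F G : E → ℍ} (hF : SmoothExt S f F) (hG : SmoothExt S f G)
    {p : E} (hp : p ∈ S) (hg : grad ρ p ≠ 0)
    {v : E} (hv : fderiv ℝ ρ p v = 0) : fderiv ℝ F p v = fderiv ℝ G p v := by
  obtain ⟨U, hU, hSU, hFU, hFf⟩ := hF
  obtain ⟨V, hV, hSV, hGV, hGf⟩ := hG
  have hFd : DifferentiableAt ℝ F p :=
    ((hFU.differentiableOn (by simp)).differentiableAt (hU.mem_nhds (hSU hp)))
  have hGd : DifferentiableAt ℝ G p :=
    ((hGV.differentiableOn (by simp)).differentiableAt (hV.mem_nhds (hSV hp)))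
  have hHd : DifferentiableAt ℝ (fun q => F q - G q) p := hFd.sub hGd
  have key : fderiv ℝ (fun q => F q - G q) p v = 0 := by
    refine tangency hΩ hρ hS hp (grad_ne_zero_fderiv hg) hHd ?_ hv
    intro q hq
    simp [hFf hq, hGf hq]
  rw [fderiv_fun_sub hFd hGd] at key
  simpa [sub_eq_zero] using key

end Tangency

section Decomp

lemma qdot_sub_right (p q r : ℍ) : qdot p (q - r) = qdot p q - qdot p r := by
  simp [qdot, mul_sub]

lemma edot_sub_right (p q r : E) : edot p (q - r) = edot p q - edot p r := by
  simp [edot, qdot_sub_right]; ring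

lemma edot_smul_left (c : ℝ) (p q : E) : edot (c • p) q = c * edot p q := by
  simp [edot, qdot_smul_left, mul_add]

lemma quat_key (g : E) (c : ℍ) (s : ℝ) :
    star (s • g.1) * (g.1 * c) + star (s • g.2) * (g.2 * c) = (s * edot g g) • c := by
  have h1 : star (s • g.1) = s • star g.1 := by ext <;> simp
  have h2 : star (s • g.2) = s • star g.2 := by ext <;> simp
  rw [h1, h2, smul_mul_assoc, smul_mul_assoc, ← mul_assoc, ← mul_assoc,
    Quaternion.star_mul_self, Quaternion.star_mul_self, ← smul_add, ← add_mul,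
    ← Quaternion.coe_add, Quaternion.coe_mul_eq_smul, smul_smul]
  congr 1
  rw [edot, qdot_self, qdot_self]

lemma deriv_decomp {Ω : Set E} (hΩ : IsOpen Ω) {ρ : E → ℝ}
    (hρ : ContDiffOn ℝ (⊤:ℕ∞) ρ Ω) {S : Set E} (hS : S = {p ∈ Ω | ρ p = 0})
    {f F G : E → ℍ} (hF : SmoothExt S f F) (hG : SmoothExt S f G)
    {p : E} (hp : p ∈ S) (hg : grad ρ p ≠ 0) (w : E) :
    fderiv ℝ F p w = fderiv ℝ G p w + edot (grad ρ p) w •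
      ((edot (grad ρ p) (grad ρ p))⁻¹ •
        (fderiv ℝ F p (grad ρ p) - fderiv ℝ G p (grad ρ p))) := by
  set g := grad ρ p with hg'
  set t := edot g g with ht'
  have ht : 0 < t := edot_self_pos hg
  have hK : fderiv ℝ ρ p (w - (t⁻¹ * edot g w) • g) = 0 := by
    rw [map_sub, map_smul, ← edot_grad_eq ρ p w, ← edot_grad_eq ρ p g, ← hg', ← ht',
      smul_eq_mul]
    field_simp
    simp
  have heq := ext_deriv_eq hΩ hρ hS hF hG hp hg hK
  rw [map_sub, map_sub, map_smul, map_smul, sub_eq_iff_eq_add] at heq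
  rw [heq, smul_smul, mul_comm (edot g w) t⁻¹, smul_sub]
  abel

end Decomp

/-- Proposition lu12. (1) The expression
`(∂F/∂ν − ⟨ν, 𝔇̄F⟩)|_S` does not depend on the chosen smooth extension `F` of
`f`; the common value is `f^⊥`. (2) If `f` is CRF and `F` is a smooth extension
of `f` with `𝔇̄F = 0` on `S`, then `∂F/∂ν = f^⊥`, `(∂F/∂x_α)|_S = f_{(x_α)}`
and `(∂F/∂y_α)|_S = f_{(y_α)}` for `α = 0,1,2,3`. -/
theorem perp_well_defined_and_derivatives_of_crf_extension
    (Ω : Set E) (hΩ : IsOpen Ω)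
    (ρ : E → ℝ) (hρ : ContDiffOn ℝ (⊤:ℕ∞) ρ Ω)
    (S : Set E) (hS : S = {p ∈ Ω | ρ p = 0})
    (hgrad : ∀ p ∈ S, grad ρ p ≠ 0)
    (f : E → ℍ) (hf : SmoothOnS S f) :
    (∀ F G, SmoothExt S f F → SmoothExt S f G →
      ∀ p ∈ S, perpOf ρ F p = perpOf ρ G p) ∧
    (∀ F, SmoothExt S f F → (∀ p ∈ S, dbar1 F p = 0 ∧ dbar2 F p = 0) →
      ∀ G, SmoothExt S f G → ∀ p ∈ S,
        fderiv ℝ F p (nu ρ p) = perpOf ρ G p ∧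
        ∀ α : Fin 4,
          fderiv ℝ F p (e1 α) = fx ρ G α p ∧ fderiv ℝ F p (e2 α) = fy ρ G α p) := by
  have part1 : ∀ F G, SmoothExt S f F → SmoothExt S f G →
      ∀ p ∈ S, perpOf ρ F p = perpOf ρ G p := by
    intro F G hF hG p hp
    set g := grad ρ p with hg'
    have hg : g ≠ 0 := hgrad p hp
    set t := edot g g with ht'
    have ht : 0 < t := edot_self_pos hg
    set s : ℝ := (Real.sqrt t)⁻¹ with hs'
    have hν : nu ρ p = s • g := rfl
    set c : ℍ := t⁻¹ • (fderiv ℝ F p g - fderiv ℝ G p g) with hc'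
    have hder : ∀ w, fderiv ℝ F p w = fderiv ℝ G p w + edot g w • c := fun w =>
      deriv_decomp hΩ hρ hS hF hG hp hg w
    have hgν : edot g (nu ρ p) = s * t := by
      rw [hν, edot_smul_right, ← ht']
    have hd1 : dbar1 F p = dbar1 G p + g.1 * c := by
      unfold dbar1
      simp_rw [hder]
      have hh : ∀ α : Fin 4, e α * (fderiv ℝ G p (e1 α) + edot g (e1 α) • c)
          = e α * fderiv ℝ G p (e1 α) + edot g (e1 α) • (e α * c) := by
        intro α; rw [mul_add, mul_smul_comm]
      simp_rw [hh, Finset.sum_add_distrib]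
      congr 1
      rw [← sum_edot_e1 g, Finset.sum_mul]
      simp [smul_mul_assoc]
    have hd2 : dbar2 F p = dbar2 G p + g.2 * c := by
      unfold dbar2
      simp_rw [hder]
      have hh : ∀ α : Fin 4, e α * (fderiv ℝ G p (e2 α) + edot g (e2 α) • c)
          = e α * fderiv ℝ G p (e2 α) + edot g (e2 α) • (e α * c) := by
        intro α; rw [mul_add, mul_smul_comm]
      simp_rw [hh, Finset.sum_add_distrib]
      congr 1
      rw [← sum_edot_e2 g, Finset.sum_mul]
      simp [smul_mul_assoc]
    have hqinner : qinner (nu ρ p) (Dbar F p) = qinner (nu ρ p) (Dbar G p) + (s * t) • c := by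
      simp only [qinner, Dbar, hd1, hd2, hν, Prod.smul_fst, Prod.smul_snd]
      rw [mul_add, mul_add, add_add_add_comm, quat_key g c s, ← ht']
    have hFν : fderiv ℝ F p (nu ρ p) = fderiv ℝ G p (nu ρ p) + (s * t) • c := by
      rw [hder, hgν]
    rw [perpOf, perpOf, hFν, hqinner]
    abel
  refine ⟨part1, ?_⟩
  intro F hF hDF G hG p hp
  set g := grad ρ p with hg'
  have hg : g ≠ 0 := hgrad p hp
  set t := edot g g with ht'
  have ht : 0 < t := edot_self_pos hg
  set s : ℝ := (Real.sqrt t)⁻¹ with hs'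
  have hν : nu ρ p = s • g := rfl
  have hsst : s * s * t = 1 := by
    rw [hs', ← mul_inv, Real.mul_self_sqrt ht.le]
    exact inv_mul_cancel₀ ht.ne'
  have hDν : fderiv ℝ F p (nu ρ p) = perpOf ρ G p := by
    rw [part1 G F hG hF p hp, perpOf]
    have h0 : qinner (nu ρ p) (Dbar F p) = 0 := by
      obtain ⟨hD1, hD2⟩ := hDF p hp
      simp [qinner, Dbar, hD1, hD2]
    rw [h0, sub_zero]
  refine ⟨hDν, ?_⟩
  intro α
  have hgν : edot g (nu ρ p) = s * t := by
    rw [hν, edot_smul_right, ← ht']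
  constructor
  · set a : ℝ := edot (e1 α) (nu ρ p) with ha
    have haval : a = s * edot g (e1 α) := by
      rw [ha, edot_comm, hν, edot_smul_left]
    have hker : fderiv ℝ ρ p (e1 α - a • nu ρ p) = 0 := by
      rw [← edot_grad_eq ρ p _, ← hg', edot_sub_right, edot_smul_right, hgν, haval]
      have : edot g (e1 α) - s * edot g (e1 α) * (s * t)
          = edot g (e1 α) * (1 - s * s * t) := by ring
      rw [this, hsst]
      simp
    have htan : fderiv ℝ G p (e1 α - a • nu ρ p) = fderiv ℝ F p (e1 α - a • nu ρ p) :=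
      ext_deriv_eq hΩ hρ hS hG hF hp hg hker
    have hfx : fx ρ G α p = fderiv ℝ F p (e1 α - a • nu ρ p)
        + a • fderiv ℝ F p (nu ρ p) := by
      rw [fx, ← ha, htan, ← hDν]
    rw [hfx, map_sub, map_smul]
    abel
  · set a : ℝ := edot (e2 α) (nu ρ p) with ha
    have haval : a = s * edot g (e2 α) := by
      rw [ha, edot_comm, hν, edot_smul_left]
    have hker : fderiv ℝ ρ p (e2 α - a • nu ρ p) = 0 := by
      rw [← edot_grad_eq ρ p _, ← hg', edot_sub_right, edot_smul_right, hgν, haval]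
      have : edot g (e2 α) - s * edot g (e2 α) * (s * t)
          = edot g (e2 α) * (1 - s * s * t) := by ring
      rw [this, hsst]
      simp
    have htan : fderiv ℝ G p (e2 α - a • nu ρ p) = fderiv ℝ F p (e2 α - a • nu ρ p) :=
      ext_deriv_eq hΩ hρ hS hG hF hp hg hker
    have hfy : fy ρ G α p = fderiv ℝ F p (e2 α - a • nu ρ p)
        + a • fderiv ℝ F p (nu ρ p) := by
      rw [fy, ← ha, htan, ← hDν]
    rw [hfy, map_sub, map_smul]
    abel
end
end

section
/- Let Σ ⊂ ℍ² ≅ ℝ⁸ be an open half-space, S ⊂ Σ a connected smooth hypersurface closed in Σ such that Σ∖S has exactly two connected components D and W with D bounded, and let f : S → ℍ be a smooth admissible function with sup_S |f| < ∞. If F is the ℍ-holomorphic extension of f to D (smooth up to S, with F|_S = f), then |F(q)| ≤ sup_S |f| for every q ∈ D. -/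
/-!
Quaternionic analysis in two variables: the Cauchy–Riemann–Fueter operator,
CRF functions and admissible functions on a hypersurface `S ⊂ ℍ²`.
-/

noncomputable section

open Set

/-- The quaternions. -/
local notation "ℍ" => Quaternion ℝ

/-! ### Auxiliary material: quaternion algebra, a second-derivative test,
and an elementary maximum principle for functions with vanishing Laplacian. -/

section AuxQuat

open Filter Topology

lemma aux_e_zero : e 0 = 1 := rfl
lemma aux_e11 : e 1 * e 1 = -(e 0) := by ext <;> simp [Quaternion.re_mul, Quaternion.imI_mul, Quaternion.imJ_mul, Quaternion.imK_mul] <;> simp [e, Quaternion.re_one, Quaternion.imI_one, Quaternion.imJ_one, Quaternion.imK_one]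
lemma aux_e12 : e 1 * e 2 = e 3 := by ext <;> simp [Quaternion.re_mul, Quaternion.imI_mul, Quaternion.imJ_mul, Quaternion.imK_mul] <;> simp [e, Quaternion.re_one, Quaternion.imI_one, Quaternion.imJ_one, Quaternion.imK_one]
lemma aux_e13 : e 1 * e 3 = -(e 2) := by ext <;> simp [Quaternion.re_mul, Quaternion.imI_mul, Quaternion.imJ_mul, Quaternion.imK_mul] <;> simp [e, Quaternion.re_one, Quaternion.imI_one, Quaternion.imJ_one, Quaternion.imK_one]
lemma aux_e21 : e 2 * e 1 = -(e 3) := by ext <;> simp [Quaternion.re_mul, Quaternion.imI_mul, Quaternion.imJ_mul, Quaternion.imK_mul] <;> simp [e, Quaternion.re_one, Quaternion.imI_one, Quaternion.imJ_one, Quaternion.imK_one]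
lemma aux_e22 : e 2 * e 2 = -(e 0) := by ext <;> simp [Quaternion.re_mul, Quaternion.imI_mul, Quaternion.imJ_mul, Quaternion.imK_mul] <;> simp [e, Quaternion.re_one, Quaternion.imI_one, Quaternion.imJ_one, Quaternion.imK_one]
lemma aux_e23 : e 2 * e 3 = e 1 := by ext <;> simp [Quaternion.re_mul, Quaternion.imI_mul, Quaternion.imJ_mul, Quaternion.imK_mul] <;> simp [e, Quaternion.re_one, Quaternion.imI_one, Quaternion.imJ_one, Quaternion.imK_one]
lemma aux_e31 : e 3 * e 1 = e 2 := by ext <;> simp [Quaternion.re_mul, Quaternion.imI_mul, Quaternion.imJ_mul, Quaternion.imK_mul] <;> simp [e, Quaternion.re_one, Quaternion.imI_one, Quaternion.imJ_one, Quaternion.imK_one]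
lemma aux_e32 : e 3 * e 2 = -(e 1) := by ext <;> simp [Quaternion.re_mul, Quaternion.imI_mul, Quaternion.imJ_mul, Quaternion.imK_mul] <;> simp [e, Quaternion.re_one, Quaternion.imI_one, Quaternion.imJ_one, Quaternion.imK_one]
lemma aux_e33 : e 3 * e 3 = -(e 0) := by ext <;> simp [Quaternion.re_mul, Quaternion.imI_mul, Quaternion.imJ_mul, Quaternion.imK_mul] <;> simp [e, Quaternion.re_one, Quaternion.imI_one, Quaternion.imJ_one, Quaternion.imK_one]
lemma aux_star_e1 : star (e 1) = -(e 1) := by ext <;> simp <;> simp [e]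
lemma aux_star_e2 : star (e 2) = -(e 2) := by ext <;> simp <;> simp [e]
lemma aux_star_e3 : star (e 3) = -(e 3) := by ext <;> simp <;> simp [e]
lemma aux_decomp (a : ℍ) : a = a.re • e 0 + a.imI • e 1 + a.imJ • e 2 + a.imK • e 3 := by
  ext <;> simp [Quaternion.re_smul] <;> simp [e, Quaternion.re_one, Quaternion.imI_one, Quaternion.imJ_one, Quaternion.imK_one]

lemma aux_key_basis0 (T : ℍ →ₗ[ℝ] ℍ) :
    ∑ α, e α * T (e 0 * e α) = star (e 0) * ∑ α, e α * T (e α) := by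
  simp only [Fin.sum_univ_four, aux_e_zero, one_mul, mul_one, aux_e11, aux_e12, aux_e13, aux_e21,
    aux_e22, aux_e23, aux_e31, aux_e32, aux_e33, aux_star_e1, aux_star_e2, aux_star_e3, star_one,
    map_neg, mul_neg, neg_mul, mul_add, ← mul_assoc]
  try simp only [aux_e_zero, one_mul, mul_one, aux_e11, aux_e12, aux_e13, aux_e21, aux_e22,
    aux_e23, aux_e31, aux_e32, aux_e33, neg_mul, mul_neg, neg_neg, map_neg]
  try abel

lemma aux_key_basis1 (T : ℍ →ₗ[ℝ] ℍ) :
    ∑ α, e α * T (e 1 * e α) = star (e 1) * ∑ α, e α * T (e α) := by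
  simp only [Fin.sum_univ_four, aux_e_zero, one_mul, mul_one, aux_e11, aux_e12, aux_e13, aux_e21,
    aux_e22, aux_e23, aux_e31, aux_e32, aux_e33, aux_star_e1, aux_star_e2, aux_star_e3, star_one,
    map_neg, mul_neg, neg_mul, mul_add, ← mul_assoc]
  try simp only [aux_e_zero, one_mul, mul_one, aux_e11, aux_e12, aux_e13, aux_e21, aux_e22,
    aux_e23, aux_e31, aux_e32, aux_e33, neg_mul, mul_neg, neg_neg, map_neg]
  try abel

lemma aux_key_basis2 (T : ℍ →ₗ[ℝ] ℍ) :
    ∑ α, e α * T (e 2 * e α) = star (e 2) * ∑ α, e α * T (e α) := by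
  simp only [Fin.sum_univ_four, aux_e_zero, one_mul, mul_one, aux_e11, aux_e12, aux_e13, aux_e21,
    aux_e22, aux_e23, aux_e31, aux_e32, aux_e33, aux_star_e1, aux_star_e2, aux_star_e3, star_one,
    map_neg, mul_neg, neg_mul, mul_add, ← mul_assoc]
  try simp only [aux_e_zero, one_mul, mul_one, aux_e11, aux_e12, aux_e13, aux_e21, aux_e22,
    aux_e23, aux_e31, aux_e32, aux_e33, neg_mul, mul_neg, neg_neg, map_neg]
  try abel

lemma aux_key_basis3 (T : ℍ →ₗ[ℝ] ℍ) :
    ∑ α, e α * T (e 3 * e α) = star (e 3) * ∑ α, e α * T (e α) := by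
  simp only [Fin.sum_univ_four, aux_e_zero, one_mul, mul_one, aux_e11, aux_e12, aux_e13, aux_e21,
    aux_e22, aux_e23, aux_e31, aux_e32, aux_e33, aux_star_e1, aux_star_e2, aux_star_e3, star_one,
    map_neg, mul_neg, neg_mul, mul_add, ← mul_assoc]
  try simp only [aux_e_zero, one_mul, mul_one, aux_e11, aux_e12, aux_e13, aux_e21, aux_e22,
    aux_e23, aux_e31, aux_e32, aux_e33, neg_mul, mul_neg, neg_neg, map_neg]
  try abel

/-- The key algebraic identity: for any `ℝ`-linear `T : ℍ → ℍ` and any `a ∈ ℍ`,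
`∑ α, i_α T(a i_α) = ā ∑ α, i_α T(i_α)`. -/
lemma aux_key_alg (T : ℍ →ₗ[ℝ] ℍ) (a : ℍ) :
    ∑ α, e α * T (a * e α) = star a * ∑ α, e α * T (e α) := by
  have ha := aux_decomp a
  rw [ha]
  simp only [add_mul, smul_mul_assoc, map_add, map_smul, mul_add, mul_smul_comm, star_add,
    star_smul, star_trivial, Finset.sum_add_distrib, ← Finset.smul_sum]
  rw [aux_key_basis0, aux_key_basis1, aux_key_basis2, aux_key_basis3]
  simp only [Quaternion.star_smul, smul_mul_assoc]

/-- The trace identity `∑ β, ī_β (∑ α, i_α H_{βα}) = ∑ α, H_{αα}` for symmetric `H`. -/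
lemma aux_trace_alg (H : Fin 4 → Fin 4 → ℍ) (hs : ∀ β γ, H β γ = H γ β) :
    ∑ β, star (e β) * ∑ α, e α * H β α = ∑ α, H α α := by
  simp only [Fin.sum_univ_four, aux_e_zero, star_one, one_mul, mul_one, aux_star_e1, aux_star_e2,
    aux_star_e3, mul_add, neg_mul, ← mul_assoc, aux_e11, aux_e12, aux_e13, aux_e21, aux_e22,
    aux_e23, aux_e31, aux_e32, aux_e33, mul_neg, neg_neg, one_mul]
  rw [hs 1 0, hs 2 0, hs 3 0, hs 2 1, hs 3 1, hs 3 2]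
  abel

/-- There is a nonzero left quaternionic line direction `(a, b)` annihilated by
the linear functional `L` (dimension count `8 > 4`). -/
lemma aux_exists_ab (L : E →ₗ[ℝ] ℝ) :
    ∃ a b : ℍ, ¬(a = 0 ∧ b = 0) ∧ ∀ h : ℍ, L (a * h, b * h) = 0 := by
  let Φ : E →ₗ[ℝ] (ℍ →ₗ[ℝ] ℝ) :=
    { toFun := fun ab => L.comp ((LinearMap.mulLeft ℝ ab.1).prod (LinearMap.mulLeft ℝ ab.2))
      map_add' := by
        intro x y; ext h
        simp only [LinearMap.comp_apply, LinearMap.prod_apply, LinearMap.mulLeft_apply,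
          LinearMap.add_apply, Pi.prod]
        rw [← map_add]
        simp [Prod.add_def, add_mul]
      map_smul' := by
        intro r x; ext h
        simp only [LinearMap.comp_apply, LinearMap.prod_apply, LinearMap.mulLeft_apply,
          LinearMap.smul_apply, RingHom.id_apply, Pi.prod, smul_eq_mul]
        show L ((r • x).1 * h, (r • x).2 * h) = r * L (x.1 * h, x.2 * h)
        rw [show ((r • x).1 * h, (r • x).2 * h) = r • (x.1 * h, x.2 * h) by
          simp [Prod.smul_def, smul_mul_assoc], map_smul, smul_eq_mul] }
  have hni : ¬ Function.Injective Φ := by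
    intro hinj
    have hle := LinearMap.finrank_le_finrank_of_injective hinj
    have h1 : Module.finrank ℝ E = 8 := by simp [Quaternion.finrank_eq_four]
    have h2 : Module.finrank ℝ (ℍ →ₗ[ℝ] ℝ) = 4 := by
      simp [Module.finrank_linearMap, Quaternion.finrank_eq_four]
    rw [h1, h2] at hle; omega
  rw [← LinearMap.ker_eq_bot] at hni
  obtain ⟨ab, hab, habne⟩ := (Submodule.ne_bot_iff _).1 hni
  refine ⟨ab.1, ab.2, ?_, ?_⟩
  · rintro ⟨h1, h2⟩
    exact habne (Prod.ext h1 h2)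
  · intro h
    have := LinearMap.congr_fun (LinearMap.mem_ker.1 hab) h
    simpa [Φ, LinearMap.mulLeft] using this

/-- First-slot restriction of a continuous linear map on `ℍ²`. -/
def auxT1 (T : E →L[ℝ] ℍ) : ℍ →ₗ[ℝ] ℍ := T.toLinearMap.comp (LinearMap.inl ℝ ℍ ℍ)

/-- Second-slot restriction of a continuous linear map on `ℍ²`. -/
def auxT2 (T : E →L[ℝ] ℍ) : ℍ →ₗ[ℝ] ℍ := T.toLinearMap.comp (LinearMap.inr ℝ ℍ ℍ)

lemma auxT1_apply (T : E →L[ℝ] ℍ) (x : ℍ) : auxT1 T x = T (x, 0) := rfl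
lemma auxT2_apply (T : E →L[ℝ] ℍ) (x : ℍ) : auxT2 T x = T (0, x) := rfl

/-- The slice identity for the Cauchy–Riemann–Fueter operator. -/
lemma aux_dbar_slice (T : E →L[ℝ] ℍ) (a b : ℍ) :
    ∑ α, e α * T (a * e α, b * e α)
      = star a * ∑ α, e α * T (e1 α) + star b * ∑ α, e α * T (e2 α) := by
  have h1 : ∀ α : Fin 4, T (a * e α, b * e α) = auxT1 T (a * e α) + auxT2 T (b * e α) := by
    intro α
    rw [show ((a * e α, b * e α) : E) = (a * e α, 0) + (0, b * e α) by simp, map_add,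
      auxT1_apply, auxT2_apply]
  have h2 : ∀ α : Fin 4, auxT1 T (e α) = T (e1 α) := fun α => auxT1_apply T (e α)
  have h3 : ∀ α : Fin 4, auxT2 T (e α) = T (e2 α) := fun α => auxT2_apply T (e α)
  calc ∑ α, e α * T (a * e α, b * e α)
      = ∑ α, (e α * auxT1 T (a * e α) + e α * auxT2 T (b * e α)) := by
        apply Finset.sum_congr rfl
        intro α _
        rw [h1 α, mul_add]
    _ = (∑ α, e α * auxT1 T (a * e α)) + ∑ α, e α * auxT2 T (b * e α) :=
        Finset.sum_add_distrib
    _ = star a * ∑ α, e α * auxT1 T (e α) + star b * ∑ α, e α * auxT2 T (e α) := by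
        rw [aux_key_alg (auxT1 T) a, aux_key_alg (auxT2 T) b]
    _ = star a * ∑ α, e α * T (e1 α) + star b * ∑ α, e α * T (e2 α) := by
        simp only [h2, h3]

lemma aux_line_hasDerivAt (m v : ℍ) (t : ℝ) : HasDerivAt (fun s : ℝ => m + s • v) v t := by
  simpa using ((hasDerivAt_id t).smul_const v).const_add m

/-- Second derivative test: at an interior local maximum the pure second
directional derivatives are nonpositive. -/
lemma aux_secondDeriv_nonpos_of_isLocalMax {ψ : ℍ → ℝ} {m : ℍ} (v : ℍ)
    (h1 : ∀ᶠ x in 𝓝 m, DifferentiableAt ℝ ψ x)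
    (h2 : DifferentiableAt ℝ (fun x => fderiv ℝ ψ x v) m)
    (h3 : IsLocalMax ψ m) :
    fderiv ℝ (fun x => fderiv ℝ ψ x v) m v ≤ 0 := by
  by_contra hpos
  push_neg at hpos
  set g₁ : ℝ → ℝ := fun t => fderiv ℝ ψ (m + t • v) v with hg₁def
  have hg₁0 : HasDerivAt g₁ (fderiv ℝ (fun x => fderiv ℝ ψ x v) m v) 0 := by
    have hf : HasFDerivAt (fun x => fderiv ℝ ψ x v)
        (fderiv ℝ (fun x => fderiv ℝ ψ x v) m) (m + (0:ℝ) • v) := by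
      rw [show m + (0:ℝ) • v = m by simp]
      exact h2.hasFDerivAt
    have hc := hf.comp_hasDerivAt 0 (aux_line_hasDerivAt m v 0)
    exact hc
  have hg₁zero : g₁ 0 = 0 := by
    have h0 : fderiv ℝ ψ m = 0 := h3.fderiv_eq_zero
    simp [hg₁def, h0]
  have hslope := hasDerivAt_iff_tendsto_slope.1 hg₁0
  have hev : ∀ᶠ t in 𝓝[>] (0:ℝ), 0 < g₁ t := by
    have h' : ∀ᶠ t in 𝓝[≠] (0:ℝ), 0 < slope g₁ 0 t :=
      hslope.eventually (eventually_gt_nhds hpos)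
    have h'' : ∀ᶠ t in 𝓝[>] (0:ℝ), 0 < slope g₁ 0 t :=
      h'.filter_mono (nhdsWithin_mono 0 fun x hx => ne_of_gt hx)
    filter_upwards [h'', self_mem_nhdsWithin] with t ht ht0
    have hslope_eq : slope g₁ 0 t = t⁻¹ * g₁ t := by simp [slope, hg₁zero]
    rw [hslope_eq] at ht
    have htpos : (0:ℝ) < t := ht0
    have := mul_pos htpos ht
    rwa [← mul_assoc, mul_inv_cancel₀ htpos.ne', one_mul] at this
  have hline0 : Tendsto (fun t : ℝ => m + t • v) (𝓝 0) (𝓝 m) := by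
    have := (aux_line_hasDerivAt m v 0).continuousAt.tendsto
    simpa using this
  have hdiff : ∀ᶠ t in 𝓝 (0:ℝ), DifferentiableAt ℝ ψ (m + t • v) := hline0.eventually h1
  have hmax : ∀ᶠ t in 𝓝 (0:ℝ), ψ (m + t • v) ≤ ψ m := hline0.eventually h3
  obtain ⟨δ₁, hδ₁, hA⟩ : ∃ u ∈ Set.Ioi (0:ℝ), Set.Ioo 0 u ⊆ {t | 0 < g₁ t} :=
    mem_nhdsGT_iff_exists_Ioo_subset.1 hev
  obtain ⟨δ₂, hδ₂pos, hδ₂⟩ := Metric.eventually_nhds_iff.1 (hdiff.and hmax)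
  set δ : ℝ := min (δ₁ / 2) (δ₂ / 2) with hδdef
  have hδpos : 0 < δ := lt_min (by linarith [Set.mem_Ioi.1 hδ₁]) (by linarith)
  have hδlt₁ : δ < δ₁ := lt_of_le_of_lt (min_le_left _ _) (by linarith [Set.mem_Ioi.1 hδ₁])
  have hδlt₂ : δ < δ₂ := lt_of_le_of_lt (min_le_right _ _) (by linarith)
  have hmem : ∀ t ∈ Set.Icc (0:ℝ) δ, DifferentiableAt ℝ ψ (m + t • v) ∧ ψ (m + t • v) ≤ ψ m := by
    intro t ht
    apply hδ₂
    rw [Real.dist_eq, sub_zero, abs_of_nonneg ht.1]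
    exact lt_of_le_of_lt ht.2 hδlt₂
  set g : ℝ → ℝ := fun t => ψ (m + t • v) with hgdef
  have hgmono : StrictMonoOn g (Set.Icc 0 δ) := by
    apply strictMonoOn_of_deriv_pos (convex_Icc 0 δ)
    · intro t ht
      exact (((hmem t ht).1.comp t
        (aux_line_hasDerivAt m v t).differentiableAt).continuousAt).continuousWithinAt
    · intro t ht
      rw [interior_Icc] at ht
      have hD : HasDerivAt g (g₁ t) t := by
        have hf : HasFDerivAt ψ (fderiv ℝ ψ (m + t • v)) (m + t • v) :=
          ((hmem t ⟨le_of_lt ht.1, le_of_lt ht.2⟩).1).hasFDerivAt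
        have := hf.comp_hasDerivAt t (aux_line_hasDerivAt m v t)
        exact this
      rw [hD.deriv]
      exact hA ⟨ht.1, lt_trans ht.2 hδlt₁⟩
  have hlt : g 0 < g δ :=
    hgmono (Set.left_mem_Icc.2 (le_of_lt hδpos)) (Set.right_mem_Icc.2 (le_of_lt hδpos)) hδpos
  have hle : g δ ≤ g 0 := by
    have := (hmem δ (Set.right_mem_Icc.2 (le_of_lt hδpos))).2
    simpa [hgdef] using this
  linarith

/-- The real part of a quaternion, as a continuous linear map. -/
def auxReCLM : ℍ →L[ℝ] ℝ :=
  LinearMap.toContinuousLinearMap (show ℍ →ₗ[ℝ] ℝ from QuaternionAlgebra.reₗ _ _ _)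

lemma auxReCLM_apply (x : ℍ) : auxReCLM x = x.re := rfl

lemma aux_top_le_cast : ((⊤:ℕ∞) : WithTop ℕ∞) ≠ 0 := by simp

lemma aux_top_add_one_le : ((⊤:ℕ∞) : WithTop ℕ∞) + 1 ≤ ((⊤:ℕ∞) : WithTop ℕ∞) := by
  exact_mod_cast le_top

lemma aux_two_le_cast : minSmoothness ℝ 2 ≤ ((⊤:ℕ∞) : WithTop ℕ∞) := by
  have h : ((2:ℕ∞) : WithTop ℕ∞) ≤ ((⊤:ℕ∞) : WithTop ℕ∞) := by exact_mod_cast le_top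
  simpa using h

/-- Elementary maximum principle: a function on a bounded open `Ω ⊆ ℍ` which is smooth with
vanishing Laplacian on `Ω`, continuous on `closure Ω`, and `≤ M` on `closure Ω \ Ω`,
is `≤ M` on `Ω`. -/
lemma aux_max_principle {Ω : Set ℍ} (hΩo : IsOpen Ω) (hΩb : Bornology.IsBounded Ω)
    {φ : ℍ → ℝ} {M : ℝ} (hcont : ContinuousOn φ (closure Ω))
    (hsm : ∀ m ∈ Ω, ContDiffAt ℝ (⊤:ℕ∞) φ m)
    (hlap : ∀ m ∈ Ω, ∑ α, fderiv ℝ (fun x => fderiv ℝ φ x (e α)) m (e α) = 0)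
    (hbd : ∀ y ∈ closure Ω \ Ω, φ y ≤ M)
    {h₀ : ℍ} (hh₀ : h₀ ∈ Ω) : φ h₀ ≤ M := by
  obtain ⟨R, hR⟩ := (hΩb.closure).exists_norm_le
  have hC0 : 0 ≤ R * R := mul_self_nonneg R
  have main : ∀ ε : ℝ, 0 < ε → φ h₀ ≤ M + ε * (R * R + 1) := by
    intro ε hε
    set N : ℍ → ℝ := fun x => auxReCLM x * auxReCLM x with hNdef
    have hNder : ∀ x : ℍ, HasFDerivAt N (auxReCLM x • auxReCLM + auxReCLM x • auxReCLM) x :=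
      fun x => (auxReCLM.hasFDerivAt).mul (auxReCLM.hasFDerivAt)
    set ψ : ℍ → ℝ := fun x => φ x + ε * N x with hψdef
    have hψcont : ContinuousOn ψ (closure Ω) :=
      hcont.add (continuous_const.mul (auxReCLM.continuous.mul auxReCLM.continuous)).continuousOn
    have hKco : IsCompact (closure Ω) :=
      Metric.isCompact_of_isClosed_isBounded isClosed_closure hΩb.closure
    have hKne : (closure Ω).Nonempty := ⟨h₀, subset_closure hh₀⟩
    obtain ⟨m, hmK, hmax⟩ := hKco.exists_isMaxOn hKne hψcont
    by_cases hm : m ∈ Ω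
    · exfalso
      have hloc : IsLocalMax ψ m :=
        hmax.isLocalMax (Filter.mem_of_superset (hΩo.mem_nhds hm) subset_closure)
      have h1 : ∀ᶠ x in 𝓝 m, DifferentiableAt ℝ ψ x := by
        filter_upwards [hΩo.mem_nhds hm] with x hx
        exact ((hsm x hx).differentiableAt aux_top_le_cast).add
          ((differentiable_const ε |>.mul (auxReCLM.differentiable.mul auxReCLM.differentiable)) x)
      have hEv : ∀ v : ℍ, (fun x => fderiv ℝ ψ x v) =ᶠ[𝓝 m]
          (fun x => fderiv ℝ φ x v + ε * (auxReCLM x * auxReCLM v + auxReCLM x * auxReCLM v)) := by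
        intro v
        filter_upwards [hΩo.mem_nhds hm] with x hx
        have hφx : HasFDerivAt φ (fderiv ℝ φ x) x :=
          ((hsm x hx).differentiableAt aux_top_le_cast).hasFDerivAt
        have hψx : HasFDerivAt ψ
            (fderiv ℝ φ x + ε • (auxReCLM x • auxReCLM + auxReCLM x • auxReCLM)) x :=
          hφx.add ((hNder x).const_mul ε)
        rw [hψx.fderiv]
        simp only [ContinuousLinearMap.add_apply, ContinuousLinearMap.coe_smul',
          Pi.smul_apply, smul_eq_mul]
        try ring
      have hφ2 : DifferentiableAt ℝ (fderiv ℝ φ) m :=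
        ((hsm m hm).fderiv_right aux_top_add_one_le).differentiableAt aux_top_le_cast
      have hD1 : ∀ v : ℍ, DifferentiableAt ℝ (fun x => fderiv ℝ φ x v) m := fun v =>
        ((ContinuousLinearMap.apply ℝ ℝ v).differentiable.differentiableAt).comp m hφ2
      have hD2 : ∀ v : ℍ, DifferentiableAt ℝ (fun x => fderiv ℝ ψ x v) m := by
        intro v
        rw [Filter.EventuallyEq.differentiableAt_iff (hEv v)]
        exact (hD1 v).add ((differentiable_const ε |>.mul
          ((auxReCLM.differentiable.mul_const _).add (auxReCLM.differentiable.mul_const _))) m)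
      have hQ : ∀ v : ℍ, fderiv ℝ (fun x => fderiv ℝ ψ x v) m v
          = fderiv ℝ (fun x => fderiv ℝ φ x v) m v
            + ε * (auxReCLM v * auxReCLM v + auxReCLM v * auxReCLM v) := by
        intro v
        rw [Filter.EventuallyEq.fderiv_eq (hEv v)]
        have hg : HasFDerivAt
            (fun x => ε * (auxReCLM x * auxReCLM v + auxReCLM x * auxReCLM v))
            ((ε * (auxReCLM v + auxReCLM v)) • auxReCLM) m := by
          have heq : (fun x => ε * (auxReCLM x * auxReCLM v + auxReCLM x * auxReCLM v))
              = fun x => (ε * (auxReCLM v + auxReCLM v)) * auxReCLM x := by funext x; ring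
          rw [heq]
          exact auxReCLM.hasFDerivAt.const_mul _
        rw [HasFDerivAt.fderiv (f := fun x => fderiv ℝ φ x v + ε * (auxReCLM x * auxReCLM v + auxReCLM x * auxReCLM v))
            ((hD1 v).hasFDerivAt.add hg)]
        simp only [ContinuousLinearMap.add_apply, ContinuousLinearMap.coe_smul',
          Pi.smul_apply, smul_eq_mul]
        ring
      have hsumQ : ∑ α, fderiv ℝ (fun x => fderiv ℝ ψ x (e α)) m (e α) = 2 * ε := by
        rw [Fin.sum_univ_four]
        rw [hQ (e 0), hQ (e 1), hQ (e 2), hQ (e 3)]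
        have h0 := hlap m hm
        rw [Fin.sum_univ_four] at h0
        have hre0 : auxReCLM (e 0) = 1 := by rw [auxReCLM_apply]; rfl
        have hre1 : auxReCLM (e 1) = 0 := by rw [auxReCLM_apply]; rfl
        have hre2 : auxReCLM (e 2) = 0 := by rw [auxReCLM_apply]; rfl
        have hre3 : auxReCLM (e 3) = 0 := by rw [auxReCLM_apply]; rfl
        rw [hre0, hre1, hre2, hre3]
        linarith [h0]
      have hneg : ∀ α : Fin 4, fderiv ℝ (fun x => fderiv ℝ ψ x (e α)) m (e α) ≤ 0 := fun α =>
        aux_secondDeriv_nonpos_of_isLocalMax (e α) h1 (hD2 (e α)) hloc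
      have hcontr : (2:ℝ) * ε ≤ 0 := by
        rw [← hsumQ]
        apply Finset.sum_nonpos
        intro α _
        exact hneg α
      linarith
    · have hmB : m ∈ closure Ω \ Ω := ⟨hmK, hm⟩
      have h1 : φ h₀ ≤ ψ h₀ := by
        have h2 : 0 ≤ ε * N h₀ := mul_nonneg (le_of_lt hε) (mul_self_nonneg _)
        have h3 : ψ h₀ = φ h₀ + ε * N h₀ := rfl
        linarith
      have h2 : ψ h₀ ≤ ψ m := hmax (subset_closure hh₀)
      have h3 : ψ m ≤ M + ε * (R * R + 1) := by
        have hb := hbd m hmB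
        have hNm : N m ≤ R * R + 1 := by
          have h4 : m.re ^ 2 ≤ Quaternion.normSq m := by
            rw [Quaternion.normSq_def']
            nlinarith [sq_nonneg m.imI, sq_nonneg m.imJ, sq_nonneg m.imK]
          have h5 : Quaternion.normSq m = ‖m‖ * ‖m‖ := Quaternion.normSq_eq_norm_mul_self m
          have h6 : ‖m‖ ≤ R := hR m hmK
          have h7 : N m = m.re ^ 2 := by
            show auxReCLM m * auxReCLM m = _
            rw [auxReCLM_apply]; ring
          nlinarith [norm_nonneg m]
        have h8 : ε * N m ≤ ε * (R * R + 1) := mul_le_mul_of_nonneg_left hNm (le_of_lt hε)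
        have h9 : ψ m = φ m + ε * N m := rfl
        linarith
      linarith
  refine le_of_forall_pos_le_add fun ε hε => ?_
  have h := main (ε / (R * R + 1)) (by positivity)
  have h2 : ε / (R * R + 1) * (R * R + 1) = ε := by field_simp
  linarith

end AuxQuat

open Filter Topology in
set_option maxHeartbeats 2000000 in
/-- Remark appl2, maximum principle for the extension. In
the situation of Theorem appl1, if `|f|` is bounded on `S` then the
ℍ-holomorphic extension `F` of `f` to `D` satisfies
`|F(q)| ≤ sup_S |f|` for all `q ∈ D`. -/
theorem extension_sup_bound
    (L : E →ₗ[ℝ] ℝ) (hL : L ≠ 0) (c : ℝ)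
    (HS : Set E) (hHS : HS = {p : E | c < L p})
    (S : Set E) (hSne : S.Nonempty) (hSsub : S ⊆ HS)
    (hSconn : IsConnected S) (hSclosed : closure S ∩ HS ⊆ S)
    (V : Set E) (hVo : IsOpen V) (hSV : S ⊆ V) (hVHS : V ⊆ HS)
    (ρ : E → ℝ) (hρ : ContDiffOn ℝ (⊤:ℕ∞) ρ V)
    (hSρ : S = {p ∈ V | ρ p = 0}) (hgrad : ∀ p ∈ S, grad ρ p ≠ 0)
    (D W : Set E) (hDo : IsOpen D) (hWo : IsOpen W)
    (hDconn : IsConnected D) (hWconn : IsConnected W)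
    (hDW : Disjoint D W) (hDWu : HS \ S = D ∪ W)
    (hDbd : Bornology.IsBounded D)
    (f : E → ℍ) (hfs : SmoothOnS S f) (hfa : Admissible ρ S f)
    (hfbd : BddAbove ((fun p => ‖f p‖) '' S))
    (F : E → ℍ) (hF : ContDiffOn ℝ (⊤:ℕ∞) F (D ∪ S))
    (hFh : ∀ q ∈ D, dbar1 F q = 0 ∧ dbar2 F q = 0)
    (hFf : EqOn F f S) :
    ∀ q ∈ D, ‖F q‖ ≤ sSup ((fun p => ‖f p‖) '' S) := by
  intro q hq
  set M := sSup ((fun p => ‖f p‖) '' S) with hM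
  have hDsub : D ⊆ HS := by
    intro x hx
    have hx' : x ∈ HS \ S := by rw [hDWu]; exact Or.inl hx
    exact hx'.1
  have hMnonneg : 0 ≤ M := by
    obtain ⟨p0, hp0⟩ := hSne
    exact le_trans (norm_nonneg (f p0)) (le_csSup hfbd ⟨p0, hp0, rfl⟩)
  have hfM : ∀ p ∈ S, ‖f p‖ ≤ M := fun p hp => le_csSup hfbd ⟨p, hp, rfl⟩
  obtain ⟨a, b, hab, habL⟩ := aux_exists_ab L
  set A : ℍ →L[ℝ] E :=
    ((ContinuousLinearMap.mul ℝ ℍ) a).prod ((ContinuousLinearMap.mul ℝ ℍ) b) with hAdef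
  have hAapp : ∀ h : ℍ, A h = (a * h, b * h) := fun h => rfl
  set ι : ℍ → E := fun h => q + A h with hιdef
  have hι0 : ι 0 = q := by
    have : A 0 = 0 := map_zero A
    simp [hιdef, this]
  set Ω : Set ℍ := ι ⁻¹' D with hΩdef
  have hιcont : Continuous ι := continuous_const.add A.continuous
  have hΩo : IsOpen Ω := hDo.preimage hιcont
  have h0Ω : (0:ℍ) ∈ Ω := by
    show ι 0 ∈ D
    rw [hι0]; exact hq
  -- `Ω` is bounded
  have hΩb : Bornology.IsBounded Ω := by
    have hker : LinearMap.ker (A : ℍ →ₗ[ℝ] ℍ × ℍ) = ⊥ := by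
      rw [LinearMap.ker_eq_bot]
      intro h1 h2 heq
      have heq' : (a * h1, b * h1) = (a * h2, b * h2) := by
        rw [← hAapp, ← hAapp]; exact heq
      have ha1 : a * h1 = a * h2 := congrArg Prod.fst heq'
      have hb1 : b * h1 = b * h2 := congrArg Prod.snd heq'
      rcases eq_or_ne a 0 with ha0 | ha0
      · have hb0 : b ≠ 0 := by
          intro hb0'
          exact hab ⟨ha0, hb0'⟩
        exact mul_left_cancel₀ hb0 hb1
      · exact mul_left_cancel₀ ha0 ha1
    obtain ⟨K, hK0, hKanti⟩ := LinearMap.exists_antilipschitzWith (A : ℍ →ₗ[ℝ] ℍ × ℍ) hker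
    obtain ⟨RD, hRD⟩ := hDbd.exists_norm_le
    rw [isBounded_iff_forall_norm_le]
    refine ⟨K * (RD + ‖q‖), ?_⟩
    intro h hh
    have h1 : dist h 0 ≤ K * dist (A h) (A 0) := by
      have := hKanti.le_mul_dist h 0
      simpa using this
    have h2 : A 0 = 0 := map_zero A
    rw [h2, dist_zero_right, dist_zero_right] at h1
    have h3 : ‖A h‖ ≤ RD + ‖q‖ := by
      have h4 : A h = ι h - q := by simp [hιdef]
      rw [h4]
      calc ‖ι h - q‖ ≤ ‖ι h‖ + ‖q‖ := norm_sub_le _ _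
      _ ≤ RD + ‖q‖ := by
        have := hRD (ι h) hh
        linarith
    calc ‖h‖ ≤ K * ‖A h‖ := h1
    _ ≤ K * (RD + ‖q‖) := by
      have : (0:ℝ) ≤ K := K.coe_nonneg
      nlinarith
  -- `L` is constant along the slice
  have hLι : ∀ h : ℍ, L (ι h) = L q := by
    intro h
    show L (q + A h) = L q
    rw [map_add]
    have : L (A h) = 0 := by rw [hAapp]; exact habL h
    rw [this, add_zero]
  -- closure of the slice goes into `D ∪ S`
  have hclos : ∀ h ∈ closure Ω, ι h ∈ D ∪ S := by
    intro h hh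
    have h1 : ι h ∈ closure D := hιcont.closure_preimage_subset D hh
    by_cases hD : ι h ∈ D
    · exact Or.inl hD
    right
    have hHSm : ι h ∈ HS := by
      rw [hHS]
      show c < L (ι h)
      rw [hLι h]
      have := hDsub hq
      rw [hHS] at this
      exact this
    have hWn : ι h ∉ W := by
      intro hW
      rcases mem_closure_iff.1 h1 W hWo hW with ⟨y, hyW, hyD⟩
      exact Set.disjoint_left.1 hDW hyD hyW
    by_contra hS
    have h2 : ι h ∈ HS \ S := ⟨hHSm, hS⟩
    rw [hDWu] at h2
    rcases h2 with h' | h'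
    exacts [hD h', hWn h']
  have hfrontS : ∀ h ∈ closure Ω \ Ω, ι h ∈ S := by
    intro h hh
    rcases hclos h hh.1 with h' | h'
    · exact absurd h' hh.2
    · exact h'
  -- the sliced function
  set G : ℍ → ℍ := fun h => F (ι h) with hGdef
  have hGsm : ∀ m ∈ Ω, ContDiffAt ℝ (⊤:ℕ∞) G m := by
    intro m hm
    have hFc : ContDiffAt ℝ (⊤:ℕ∞) F (ι m) :=
      (hF.mono Set.subset_union_left).contDiffAt (hDo.mem_nhds hm)
    have hιc : ContDiffAt ℝ (⊤:ℕ∞) ι m := (contDiff_const.add A.contDiff).contDiffAt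
    exact hFc.comp m hιc
  have hGd : ∀ m ∈ Ω, HasFDerivAt G ((fderiv ℝ F (ι m)).comp A) m := by
    intro m hm
    have hFd : DifferentiableAt ℝ F (ι m) :=
      ((hF.mono Set.subset_union_left).contDiffAt (hDo.mem_nhds hm)).differentiableAt
        aux_top_le_cast
    have hid : HasFDerivAt ι A m := A.hasFDerivAt.const_add q
    exact hFd.hasFDerivAt.comp m hid
  -- the Cauchy–Riemann–Fueter operator vanishes along the slice
  have hdbarG : ∀ m ∈ Ω, ∑ α, e α * fderiv ℝ G m (e α) = 0 := by
    intro m hm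
    have hf : fderiv ℝ G m = (fderiv ℝ F (ι m)).comp A := (hGd m hm).fderiv
    have hstep : ∀ α : Fin 4, fderiv ℝ G m (e α) = fderiv ℝ F (ι m) (a * e α, b * e α) := by
      intro α
      rw [hf, ContinuousLinearMap.comp_apply, hAapp]
    calc ∑ α, e α * fderiv ℝ G m (e α)
        = ∑ α, e α * fderiv ℝ F (ι m) (a * e α, b * e α) := by
          apply Finset.sum_congr rfl
          intro α _
          rw [hstep α]
      _ = star a * ∑ α, e α * fderiv ℝ F (ι m) (e1 α)
            + star b * ∑ α, e α * fderiv ℝ F (ι m) (e2 α) :=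
          aux_dbar_slice (fderiv ℝ F (ι m)) a b
      _ = star a * dbar1 F (ι m) + star b * dbar2 F (ι m) := rfl
      _ = 0 := by
          rw [(hFh (ι m) hm).1, (hFh (ι m) hm).2]
          simp
  -- the (quaternionic) Laplacian of `G` vanishes on `Ω`
  have hlapG : ∀ m ∈ Ω, ∑ α, fderiv ℝ (fderiv ℝ G) m (e α) (e α) = 0 := by
    intro m hm
    have hGc := hGsm m hm
    have hf'd : DifferentiableAt ℝ (fderiv ℝ G) m :=
      (hGc.fderiv_right aux_top_add_one_le).differentiableAt aux_top_le_cast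
    have hf''d : HasFDerivAt (fderiv ℝ G) (fderiv ℝ (fderiv ℝ G) m) m := hf'd.hasFDerivAt
    set f'' := fderiv ℝ (fderiv ℝ G) m with hf''def
    set B : (ℍ →L[ℝ] ℍ) →L[ℝ] ℍ :=
      ∑ α, ((ContinuousLinearMap.mul ℝ ℍ (e α)).comp (ContinuousLinearMap.apply ℝ ℍ (e α)))
      with hBdef
    have hBapp : ∀ (T : ℍ →L[ℝ] ℍ), B T = ∑ α, e α * T (e α) := by
      intro T
      rw [hBdef]
      simp [ContinuousLinearMap.sum_apply]
    have hsumfun : (fun x => B (fderiv ℝ G x)) =ᶠ[𝓝 m] (fun _ => (0:ℍ)) := by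
      apply Filter.eventuallyEq_of_mem (hΩo.mem_nhds hm)
      intro x hx
      show B (fderiv ℝ G x) = 0
      rw [hBapp]
      exact hdbarG x hx
    have hcompd : HasFDerivAt (fun x => B (fderiv ℝ G x)) (B.comp f'') m :=
      B.hasFDerivAt.comp m
        ((hGc.fderiv_right aux_top_add_one_le).differentiableAt aux_top_le_cast).hasFDerivAt
    have hzero : B.comp f'' = 0 := by
      have h1 : fderiv ℝ (fun x => B (fderiv ℝ G x)) m
          = fderiv ℝ (fun _ : ℍ => (0:ℍ)) m := hsumfun.fderiv_eq
      rw [fderiv_const_apply] at h1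
      rw [← hcompd.fderiv, h1]
    have hL2 : ∀ β : Fin 4, ∑ α, e α * f'' (e β) (e α) = 0 := by
      intro β
      have h1 : (B.comp f'') (e β) = 0 := by rw [hzero]; rfl
      rw [ContinuousLinearMap.comp_apply, hBapp] at h1
      exact h1
    have hsymm : ∀ β γ : Fin 4, f'' (e β) (e γ) = f'' (e γ) (e β) := by
      intro β γ
      exact (hGc.isSymmSndFDerivAt aux_two_le_cast) (e β) (e γ)
    have htr := aux_trace_alg (fun β γ => f'' (e β) (e γ)) hsymm
    have hLHS : ∑ β, star (e β) * ∑ α, e α * f'' (e β) (e α) = 0 := by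
      apply Finset.sum_eq_zero
      intro β _
      rw [hL2 β, mul_zero]
    rw [hLHS] at htr
    exact htr.symm
  -- the scalar test functions
  set u : ℍ := F q with hudef
  set ℓ : ℍ →L[ℝ] ℝ := (innerSL ℝ) u with hℓdef
  set φ : ℍ → ℝ := fun h => ℓ (G h) with hφdef
  have hGcont : ContinuousOn G (closure Ω) := by
    have h1 : ContinuousOn F (D ∪ S) := hF.continuousOn
    exact h1.comp hιcont.continuousOn (fun h hh => hclos h hh)
  have hφcont : ContinuousOn φ (closure Ω) := ℓ.continuous.comp_continuousOn hGcont
  have hφsm : ∀ m ∈ Ω, ContDiffAt ℝ (⊤:ℕ∞) φ m := by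
    intro m hm
    exact (ℓ.contDiff.contDiffAt).comp m (hGsm m hm)
  have hφd : ∀ x ∈ Ω, HasFDerivAt φ (ℓ.comp (fderiv ℝ G x)) x := by
    intro x hx
    have hGx : HasFDerivAt G (fderiv ℝ G x) x :=
      ((hGsm x hx).differentiableAt aux_top_le_cast).hasFDerivAt
    exact ℓ.hasFDerivAt.comp x hGx
  have hφlap : ∀ m ∈ Ω, ∑ α, fderiv ℝ (fun x => fderiv ℝ φ x (e α)) m (e α) = 0 := by
    intro m hm
    have hGc := hGsm m hm
    have hf'd : DifferentiableAt ℝ (fderiv ℝ G) m :=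
      (hGc.fderiv_right aux_top_add_one_le).differentiableAt aux_top_le_cast
    have hf''d : HasFDerivAt (fderiv ℝ G) (fderiv ℝ (fderiv ℝ G) m) m := hf'd.hasFDerivAt
    set f'' := fderiv ℝ (fderiv ℝ G) m with hf''def
    have hterm : ∀ α : Fin 4,
        fderiv ℝ (fun x => fderiv ℝ φ x (e α)) m (e α) = ℓ (f'' (e α) (e α)) := by
      intro α
      have hEv : (fun x => fderiv ℝ φ x (e α)) =ᶠ[𝓝 m]
          (fun x => ℓ (fderiv ℝ G x (e α))) := by
        apply Filter.eventuallyEq_of_mem (hΩo.mem_nhds hm)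
        intro x hx
        show fderiv ℝ φ x (e α) = ℓ (fderiv ℝ G x (e α))
        rw [(hφd x hx).fderiv]
        rfl
      rw [Filter.EventuallyEq.fderiv_eq hEv]
      have hDα : HasFDerivAt (fun x => fderiv ℝ G x (e α))
          ((ContinuousLinearMap.apply ℝ ℍ (e α)).comp f'') m :=
        (ContinuousLinearMap.apply ℝ ℍ (e α)).hasFDerivAt.comp m hf''d
      have hcomp : HasFDerivAt (fun x => ℓ (fderiv ℝ G x (e α)))
          (ℓ.comp ((ContinuousLinearMap.apply ℝ ℍ (e α)).comp f'')) m :=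
        ℓ.hasFDerivAt.comp m hDα
      rw [hcomp.fderiv]
      rfl
    calc ∑ α, fderiv ℝ (fun x => fderiv ℝ φ x (e α)) m (e α)
        = ∑ α, ℓ (f'' (e α) (e α)) := by
          apply Finset.sum_congr rfl
          intro α _
          exact hterm α
      _ = ℓ (∑ α, f'' (e α) (e α)) := (map_sum ℓ _ _).symm
      _ = 0 := by rw [hlapG m hm, map_zero]
  have hφbd : ∀ y ∈ closure Ω \ Ω, φ y ≤ ‖u‖ * M := by
    intro y hy
    have hyS : ι y ∈ S := hfrontS y hy
    have h1 : φ y = inner ℝ u (F (ι y)) := by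
      show ℓ (G y) = _
      rw [hℓdef]
      rfl
    have h2 : (inner ℝ u (F (ι y)) : ℝ) ≤ ‖u‖ * ‖F (ι y)‖ := real_inner_le_norm u _
    have h3 : F (ι y) = f (ι y) := hFf hyS
    have h4 : ‖f (ι y)‖ ≤ M := hfM _ hyS
    rw [h1]
    calc (inner ℝ u (F (ι y)) : ℝ) ≤ ‖u‖ * ‖F (ι y)‖ := h2
    _ ≤ ‖u‖ * M := by
      rw [h3]
      exact mul_le_mul_of_nonneg_left h4 (norm_nonneg u)
  have hmain : φ 0 ≤ ‖u‖ * M :=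
    aux_max_principle hΩo hΩb hφcont hφsm hφlap hφbd h0Ω
  have hφ0 : φ 0 = ‖u‖ * ‖u‖ := by
    have h1 : G 0 = u := by
      show F (ι 0) = u
      rw [hι0]
    show ℓ (G 0) = _
    rw [h1, hℓdef]
    show (inner ℝ u u : ℝ) = ‖u‖ * ‖u‖
    exact real_inner_self_eq_norm_mul_norm u
  rw [hφ0] at hmain
  show ‖u‖ ≤ M
  rcases eq_or_lt_of_le (norm_nonneg u) with h0 | h0
  · rw [← h0]; exact hMnonneg
  · exact le_of_mul_le_mul_left (by linarith) h0
end
end
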